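/- The function w(z) = d/dz ln(H_{1,1}(z)/H_{1,2}(z)), where H_{1,1}(z) = H_1(z) = 2z and H_{1,2}(z) = W(H_1, H_2)(z) = 8z² + 4, solves the fourth Painlevé equation with α = −(1+2+1) = −4 and β = −2, at all z where the relevant quantities are nonzero. -/

import Mathlib

open Real Filter Topology

noncomputable def Wfun : ℝ → ℝ := fun y => y⁻¹ - 16 * y / (8 * y ^ 2 + 4)

noncomputable def W1fun : ℝ → ℝ := fun y =>
  -(1 / y ^ 2) - (64 - 128 * y ^ 2) / (8 * y ^ 2 + 4) ^ 2

lemma hden (y : ℝ) : HasDerivAt (fun s : ℝ => 8 * s ^ 2 + 4) (16 * y) y := by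
  have := ((hasDerivAt_pow 2 y).const_mul 8).add_const 4
  exact this.congr_deriv (by ring)

lemma hdenne (y : ℝ) : 8 * y ^ 2 + 4 ≠ 0 := by positivity

lemma hlog (y : ℝ) (hy : y ≠ 0) :
    HasDerivAt (fun s : ℝ => Real.log ((2 * s) / (8 * s ^ 2 + 4))) (Wfun y) y := by
  have hnum : HasDerivAt (fun s : ℝ => 2 * s) 2 y := by
    simpa using (hasDerivAt_id y).const_mul 2
  have hf : HasDerivAt (fun s : ℝ => (2 * s) / (8 * s ^ 2 + 4))
      ((2 * (8 * y ^ 2 + 4) - 2 * y * (16 * y)) / (8 * y ^ 2 + 4) ^ 2) y :=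
    hnum.div (hden y) (hdenne y)
  have hfy : (2 * y) / (8 * y ^ 2 + 4) ≠ 0 :=
    div_ne_zero (by simpa using hy) (hdenne y)
  have := hf.log hfy
  convert this using 1
  unfold Wfun
  field_simp

lemma hW (y : ℝ) (hy : y ≠ 0) : HasDerivAt Wfun (W1fun y) y := by
  have h1 : HasDerivAt (fun s : ℝ => s⁻¹) (-(1 / y ^ 2)) y := by
    simpa [one_div] using hasDerivAt_inv hy
  have h2 : HasDerivAt (fun s : ℝ => 16 * s / (8 * s ^ 2 + 4))
      ((16 * (8 * y ^ 2 + 4) - 16 * y * (16 * y)) / (8 * y ^ 2 + 4) ^ 2) y := by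
    have hnum : HasDerivAt (fun s : ℝ => 16 * s) 16 y := by
      simpa using (hasDerivAt_id y).const_mul 16
    exact hnum.div (hden y) (hdenne y)
  have := h1.sub h2
  refine this.congr_deriv ?_
  unfold W1fun
  congr 1
  field_simp
  ring

lemma hW1 (y : ℝ) (hy : y ≠ 0) : HasDerivAt W1fun
    (2 / y ^ 3 + ((-(256 * y)) * (8 * y ^ 2 + 4) ^ 2 -
      (64 - 128 * y ^ 2) * (2 * (8 * y ^ 2 + 4) ^ 1 * (16 * y))) / ((8 * y ^ 2 + 4) ^ 2) ^ 2 * (-1)) y := by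
  have h1 : HasDerivAt (fun s : ℝ => -(1 / s ^ 2)) (2 / y ^ 3) y := by
    have : HasDerivAt (fun s : ℝ => (s ^ 2)⁻¹) (-(2 * y ^ (2 - 1)) / (y ^ 2) ^ 2) y :=
      (hasDerivAt_pow 2 y).inv (pow_ne_zero 2 hy)
    have h' := this.neg
    have h'' : (fun s : ℝ => -(1 / s ^ 2)) = -fun s => (s ^ 2)⁻¹ := by
      funext s; simp [one_div]
    rw [h'']; exact h'.congr_deriv (by field_simp; ring)
  have hnum : HasDerivAt (fun s : ℝ => 64 - 128 * s ^ 2) (-(256 * y)) y := by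
    have := (((hasDerivAt_pow 2 y).const_mul 128).const_sub 64)
    exact this.congr_deriv (by ring)
  have hden2 : HasDerivAt (fun s : ℝ => (8 * s ^ 2 + 4) ^ 2)
      (2 * (8 * y ^ 2 + 4) ^ 1 * (16 * y)) y := (hden y).pow 2
  have h2 := (hnum.div hden2 (pow_ne_zero 2 (hdenne y))).neg
  have := h1.sub (hnum.div hden2 (pow_ne_zero 2 (hdenne y)))
  exact this.congr_deriv (by ring)

/-- The rational solution `w = d/dz ln(H_{1,1}/H_{1,2})`, with `H_{1,1}(z) = 2z` and
`H_{1,2}(z) = 8z² + 4`, of the fourth Painlevé equation with `α = -4`, `β = -2`. -/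
theorem piv_genHermite_sol_2 :
    ∀ z : ℝ, 2 * z ≠ 0 → 8 * z ^ 2 + 4 ≠ 0 →
      let w : ℝ → ℝ := fun y => deriv (fun s : ℝ => Real.log ((2 * s) / (8 * s ^ 2 + 4))) y
      w z ≠ 0 →
        deriv (deriv w) z =
          (deriv w z) ^ 2 / (2 * w z) + (3 / 2) * (w z) ^ 3 + 4 * z * (w z) ^ 2
            + 2 * (z ^ 2 - (-4)) * w z + (-2) / (w z) := by
  intro z hz2 hq w hw
  have hz : z ≠ 0 := by intro h; exact hz2 (by rw [h]; ring)
  have hne : ∀ᶠ y in 𝓝 z, y ≠ 0 := isOpen_ne.eventually_mem hz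
  -- w =ᶠ Wfun near z
  have hwW : w =ᶠ[𝓝 z] Wfun := by
    filter_upwards [hne] with y hy
    exact (hlog y hy).deriv
  -- deriv Wfun =ᶠ W1fun near z
  have hW1e : deriv Wfun =ᶠ[𝓝 z] W1fun := by
    filter_upwards [hne] with y hy
    exact (hW y hy).deriv
  have hwz : w z = Wfun z := hwW.self_of_nhds
  have hdw : deriv w z = W1fun z := by
    rw [hwW.deriv_eq]; exact (hW z hz).deriv
  have hddw : deriv (deriv w) z = deriv W1fun z := by
    rw [(hwW.deriv.trans hW1e).deriv_eq]
  -- numerator nonzero from hw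
  have hwz' : Wfun z = (4 - 8 * z ^ 2) / (z * (8 * z ^ 2 + 4)) := by
    unfold Wfun; field_simp; ring
  have hnum : (4 : ℝ) - 8 * z ^ 2 ≠ 0 := by
    intro h
    apply hw
    rw [hwz, hwz', h, zero_div]
  have hd := hdenne z
  rw [hddw, (hW1 z hz).deriv, hdw, hwz, hwz']
  unfold W1fun
  have hnum' : (8 : ℝ) * z ^ 2 - 4 ≠ 0 := by intro h; apply hnum; linarith
  have e : (4 : ℝ) - 8 * z ^ 2 = -(8 * z ^ 2 - 4) := by ring
  rw [e]
  field_simp [hz, hd, hnum']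
  rw [eq_div_iff (by rw [mul_comm]; exact hnum')]
  ring
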